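/- For real numbers 0 < a < b, the integral of 1/sqrt((T²−a²)(b²−T²)) for T from a to b equals (1/b)·K(m) where m = 1 − a²/b². -/

import Mathlib

open Real intervalIntegral MeasureTheory Set

theorem stmt_1 (a b : ℝ) (ha : 0 < a) (hab : a < b) :
    ∫ T in a..b, 1 / Real.sqrt ((T ^ 2 - a ^ 2) * (b ^ 2 - T ^ 2)) =
      (1 / b) * ∫ θ in (0:ℝ)..(π / 2),
        1 / Real.sqrt (1 - (1 - a ^ 2 / b ^ 2) * Real.sin θ ^ 2) := by
  have hb : 0 < b := ha.trans hab
  have hba : 0 < b ^ 2 - a ^ 2 := by nlinarith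
  have hπ : (0:ℝ) < π / 2 := by positivity
  set u : ℝ → ℝ := fun θ => b ^ 2 - (b ^ 2 - a ^ 2) * Real.sin θ ^ 2 with hu_def
  set f : ℝ → ℝ := fun θ => Real.sqrt (u θ) with hf_def
  set f' : ℝ → ℝ := fun θ =>
    (-((b ^ 2 - a ^ 2) * (2 * Real.sin θ * Real.cos θ))) / (2 * Real.sqrt (u θ)) with hf'_def
  -- basic facts on Ioo 0 (π/2)
  have hsin : ∀ θ ∈ Ioo (0:ℝ) (π/2), 0 < Real.sin θ := fun θ hθ =>
    Real.sin_pos_of_pos_of_lt_pi hθ.1 (hθ.2.trans (by linarith [Real.pi_pos]))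
  have hcos : ∀ θ ∈ Ioo (0:ℝ) (π/2), 0 < Real.cos θ := fun θ hθ =>
    Real.cos_pos_of_mem_Ioo ⟨by linarith [hθ.1, Real.pi_pos], hθ.2⟩
  have hsin1 : ∀ θ ∈ Ioo (0:ℝ) (π/2), Real.sin θ < 1 := by
    intro θ hθ
    have := Real.sin_lt_sin_of_lt_of_le_pi_div_two (x := θ) (y := π/2) (by linarith [hθ.1]) le_rfl hθ.2
    simpa using this
  have hupos : ∀ θ ∈ Ioo (0:ℝ) (π/2), 0 < u θ := by
    intro θ hθ
    have h1 := hsin θ hθ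
    have h2 := hsin1 θ hθ
    have hs2 : Real.sin θ ^ 2 < 1 := by nlinarith
    simp only [hu_def]
    nlinarith [mul_lt_mul_of_pos_left hs2 hba, mul_pos ha ha]
  -- derivative
  have hderiv : ∀ θ ∈ Ioo (0:ℝ) (π/2), HasDerivWithinAt f (f' θ) (Ioo 0 (π/2)) θ := by
    intro θ hθ
    have hu' : HasDerivAt u (-((b ^ 2 - a ^ 2) * (2 * Real.sin θ * Real.cos θ))) θ := by
      have : HasDerivAt (fun θ => Real.sin θ ^ 2) (2 * Real.sin θ * Real.cos θ) θ := by
        simpa using (Real.hasDerivAt_sin θ).fun_pow 2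
      simpa using ((this.const_mul (b ^ 2 - a ^ 2)).const_sub (b ^ 2)).neg.neg
    have := hu'.sqrt (ne_of_gt (hupos θ hθ))
    exact this.hasDerivWithinAt
  -- strict anti / injective
  have hanti : StrictAntiOn f (Ioo (0:ℝ) (π/2)) := by
    intro x hx y hy hxy
    have hsx := hsin x hx
    have hsy := hsin y hy
    have hxy' : Real.sin x < Real.sin y := by
      apply Real.strictMonoOn_sin ⟨by linarith [hx.1, Real.pi_pos], hx.2.le⟩
        ⟨by linarith [hy.1, Real.pi_pos], hy.2.le⟩ hxy
    have h2 : Real.sin x ^ 2 < Real.sin y ^ 2 := by nlinarith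
    have : u y < u x := by
      simp only [hu_def]; nlinarith [mul_lt_mul_of_pos_left h2 hba]
    exact Real.sqrt_lt_sqrt (hupos y hy).le this
  -- endpoint values
  have hf0 : f 0 = b := by simp [hf_def, hu_def, Real.sqrt_sq hb.le]
  have hfπ : f (π/2) = a := by
    simp [hf_def, hu_def, Real.sin_pi_div_two, Real.sqrt_sq ha.le]
  -- image
  have himg : f '' Ioo (0:ℝ) (π/2) = Ioo a b := by
    apply Subset.antisymm
    · rintro _ ⟨θ, hθ, rfl⟩
      have h1 := hsin θ hθ
      have h2 := hsin1 θ hθ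
      constructor
      · have hs2 : Real.sin θ ^ 2 < 1 := by nlinarith
        have : a ^ 2 < u θ := by
          simp only [hu_def]; nlinarith [mul_lt_mul_of_pos_left hs2 hba]
        have := Real.sqrt_lt_sqrt (by positivity) this
        rwa [Real.sqrt_sq ha.le] at this
      · have hs2 : 0 < Real.sin θ ^ 2 := by positivity
        have : u θ < b ^ 2 := by
          simp only [hu_def]; nlinarith [mul_pos hba hs2]
        calc f θ < Real.sqrt (b ^ 2) := Real.sqrt_lt_sqrt (hupos θ hθ).le this
          _ = b := Real.sqrt_sq hb.le
    · have hcont : ContinuousOn f (Icc 0 (π/2)) := by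
        apply Continuous.continuousOn
        exact (continuous_const.sub (continuous_const.mul (Real.continuous_sin.pow 2))).sqrt
      have := intermediate_value_Ioo' hπ.le hcont
      rwa [hf0, hfπ] at this
  -- main chain
  rw [intervalIntegral.integral_of_le hab.le, intervalIntegral.integral_of_le hπ.le,
    MeasureTheory.integral_Ioc_eq_integral_Ioo, MeasureTheory.integral_Ioc_eq_integral_Ioo,
    ← himg,
    MeasureTheory.integral_image_eq_integral_abs_deriv_smul measurableSet_Ioo hderiv
      (hanti.injOn) _]
  rw [← MeasureTheory.integral_const_mul]
  apply MeasureTheory.setIntegral_congr_fun measurableSet_Ioo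
  intro θ hθ
  have hs := hsin θ hθ
  have hc := hcos θ hθ
  have hu := hupos θ hθ
  have hsqu : 0 < Real.sqrt (u θ) := Real.sqrt_pos.mpr hu
  have hfθ2 : f θ ^ 2 = u θ := Real.sq_sqrt hu.le
  have hpyth := Real.sin_sq_add_cos_sq θ
  -- compute g (f θ)
  have hprod : (f θ ^ 2 - a ^ 2) * (b ^ 2 - f θ ^ 2)
      = ((b ^ 2 - a ^ 2) * Real.sin θ * Real.cos θ) ^ 2 := by
    rw [hfθ2]; simp only [hu_def]
    linear_combination (-(b ^ 2 - a ^ 2) ^ 2 * Real.sin θ ^ 2) * hpyth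
  have hg : 1 / Real.sqrt ((f θ ^ 2 - a ^ 2) * (b ^ 2 - f θ ^ 2))
      = 1 / ((b ^ 2 - a ^ 2) * Real.sin θ * Real.cos θ) := by
    rw [hprod, Real.sqrt_sq (by positivity)]
  -- compute |f' θ|
  have habs : |f' θ| = (b ^ 2 - a ^ 2) * Real.sin θ * Real.cos θ / Real.sqrt (u θ) := by
    have hneg : f' θ = -((b ^ 2 - a ^ 2) * Real.sin θ * Real.cos θ / Real.sqrt (u θ)) := by
      simp only [hf'_def]; field_simp
    rw [hneg, abs_neg, abs_of_pos (by positivity)]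
  -- RHS denominator
  have hrhs : Real.sqrt (1 - (1 - a ^ 2 / b ^ 2) * Real.sin θ ^ 2) = Real.sqrt (u θ) / b := by
    have : 1 - (1 - a ^ 2 / b ^ 2) * Real.sin θ ^ 2 = u θ / b ^ 2 := by
      simp only [hu_def]; field_simp
    rw [this, Real.sqrt_div hu.le, Real.sqrt_sq hb.le]
  simp only [smul_eq_mul]
  rw [hg, habs, hrhs]
  field_simp
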